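/- Let d ≥ 1, X = [0,1]^d, let f, g : X → ℝ be bounded and measurable, and let ε > 0 and δ ∈ (0,1]. Then the Gibbs measure P_{g/ε} satisfies P_{g/ε}({x ∈ X : f(x) ≤ ε·L_{f/ε} − ε·log(1/δ) − ε·D_suplog(P_{f/ε}, P_{g/ε})}) ≤ δ; in other words, a sample from an approximate Gibbs distribution that is close to P_{f/ε} in sup-log distance is, with probability at least 1 − δ, an approximate maximizer of f up to ε·log(1/δ) plus ε times the sup-log distance. -/

import Mathlib

open MeasureTheory Real

noncomputable section

/-- The unit cube `[0,1]^d` in `ℝ^d`. -/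
def cube (d : ℕ) : Set (Fin d → ℝ) := Set.Icc 0 1

/-- The partition function `Z_f = ∫_X exp(f(x)) dx`. -/
def partZ {d : ℕ} (f : (Fin d → ℝ) → ℝ) : ℝ := ∫ x in cube d, Real.exp (f x)

/-- The log-partition function `L_f = log Z_f`. -/
def logPart {d : ℕ} (f : (Fin d → ℝ) → ℝ) : ℝ := Real.log (partZ f)

/-- The Gibbs measure `P_f` with density `exp(f(x))/Z_f` w.r.t. Lebesgue measure on the cube. -/
def gibbs {d : ℕ} (f : (Fin d → ℝ) → ℝ) : Measure (Fin d → ℝ) :=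
  (volume.restrict (cube d)).withDensity fun x => ENNReal.ofReal (Real.exp (f x) / partZ f)

/-- Essential supremum norm `‖h‖_∞` over the cube. -/
def supNormOn {d : ℕ} (h : (Fin d → ℝ) → ℝ) : ℝ :=
  essSup (fun x => |h x|) (volume.restrict (cube d))

/-- Total variation distance between two measures: `sup_A |P(A) − Q(A)|`. -/
def DTV {α : Type*} [MeasurableSpace α] (P Q : Measure α) : ℝ :=
  ⨆ A : {A : Set α // MeasurableSet A}, |(P A.1).toReal - (Q A.1).toReal|

/-- `f` is bounded on the cube. -/
def BddOnCube {d : ℕ} (f : (Fin d → ℝ) → ℝ) : Prop := ∃ C, ∀ x ∈ cube d, |f x| ≤ C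

/-- Proposition 3.3 (a), optimization by approximate sampling:
for bounded measurable `f, g` on `X = [0,1]^d`, `ε > 0`, `δ ∈ (0,1]`,
`P_{g/ε}({x : f(x) ≤ ε L_{f/ε} − ε log(1/δ) − ε D_suplog(P_{f/ε}, P_{g/ε})}) ≤ δ`,
where `D_suplog(P_{f/ε}, P_{g/ε}) = ‖(f/ε − L_{f/ε}) − (g/ε − L_{g/ε})‖_∞`. -/
theorem opt_by_approximate_sampling (d : ℕ) (hd : 1 ≤ d) (f g : (Fin d → ℝ) → ℝ)
    (hfm : Measurable f) (hgm : Measurable g)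
    (hfb : BddOnCube f) (hgb : BddOnCube g)
    (ε : ℝ) (hε : 0 < ε) (δ : ℝ) (hδ0 : 0 < δ) (hδ1 : δ ≤ 1) :
    gibbs (fun x => g x / ε)
        {x ∈ cube d |
          f x ≤ ε * logPart (fun y => f y / ε) - ε * Real.log (1 / δ)
            - ε * supNormOn (fun y =>
                (f y / ε - logPart (fun z => f z / ε)) - (g y / ε - logPart (fun z => g z / ε)))}
      ≤ ENNReal.ofReal δ := by
  classical
  obtain ⟨Cf, hCf⟩ := hfb
  obtain ⟨Cg, hCg⟩ := hgb
  set u : (Fin d → ℝ) → ℝ := fun x => f x / ε with hu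
  set v : (Fin d → ℝ) → ℝ := fun x => g x / ε with hv
  set Lu : ℝ := logPart u with hLu
  set Lv : ℝ := logPart v with hLv
  set D : ℝ := supNormOn (fun y => (u y - Lu) - (v y - Lv)) with hD
  have hcube : MeasurableSet (cube d) := measurableSet_Icc
  have hvolcube : volume (cube d) = 1 := by
    simp [cube, Real.volume_Icc_pi]
  -- positivity of partZ v
  have hvm : Measurable v := hgm.div_const ε
  have hZv : 0 < partZ v := by
    have hint : IntegrableOn (fun x => Real.exp (v x)) (cube d) volume := by
      refine Integrable.mono' (show IntegrableOn (fun _ => Real.exp (Cg / ε)) (cube d) volume from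
        integrableOn_const (by simp [hvolcube]))
        (hvm.exp.aestronglyMeasurable) ?_
      filter_upwards [ae_restrict_mem hcube] with x hx
      rw [Real.norm_eq_abs, abs_of_pos (Real.exp_pos _)]
      exact Real.exp_le_exp.2 (div_le_div_of_nonneg_right
        ((abs_le.1 (hCg x hx)).2) hε.le |>.trans_eq rfl)
    have h1 : Real.exp (-(Cg / ε)) * (volume (cube d)).toReal
        ≤ ∫ x in cube d, Real.exp (v x) := by
      refine setIntegral_ge_of_const_le_real hcube (by simp [hvolcube]) (fun x hx => ?_) hint
      exact Real.exp_le_exp.2 (by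
        have := (abs_le.1 (hCg x hx)).1
        have := div_le_div_of_nonneg_right this hε.le
        simpa [neg_div] using this)
    have : (0:ℝ) < Real.exp (-(Cg / ε)) * (volume (cube d)).toReal := by
      rw [hvolcube]; simp [Real.exp_pos]
    exact this.trans_le h1
  have hexpLv : Real.exp Lv = partZ v := Real.exp_log hZv
  -- the set
  set c : ℝ := ε * Lu - ε * Real.log (1 / δ) - ε * D with hc
  set A : Set (Fin d → ℝ) := {x ∈ cube d | f x ≤ c} with hA
  have hAm : MeasurableSet A := hcube.inter (hfm measurableSet_Iic)
  -- essSup bound a.e.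
  have hbdd : Filter.IsBoundedUnder (· ≤ ·) (ae (volume.restrict (cube d)))
      (fun x => |(u x - Lu) - (v x - Lv)|) := by
    refine ⟨Cf / ε + |Lu| + (Cg / ε + |Lv|), ?_⟩
    rw [Filter.eventually_map]
    filter_upwards [ae_restrict_mem hcube] with x hx
    have h1 : |u x - Lu| ≤ Cf / ε + |Lu| := by
      refine (abs_sub _ _).trans (add_le_add ?_ le_rfl)
      rw [hu, abs_div, abs_of_pos hε]
      exact div_le_div_of_nonneg_right (hCf x hx) hε.le
    have h2 : |v x - Lv| ≤ Cg / ε + |Lv| := by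
      refine (abs_sub _ _).trans (add_le_add ?_ le_rfl)
      rw [hv, abs_div, abs_of_pos hε]
      exact div_le_div_of_nonneg_right (hCg x hx) hε.le
    exact (abs_sub _ _).trans (add_le_add h1 h2)
  have hae : ∀ᵐ x ∂(volume.restrict (cube d)), |(u x - Lu) - (v x - Lv)| ≤ D :=
    ae_le_essSup hbdd
  -- pointwise bound on the density on A, a.e.
  have hptwise : ∀ᵐ x ∂(volume.restrict (cube d)),
      x ∈ A → ENNReal.ofReal (Real.exp (v x) / partZ v) ≤ ENNReal.ofReal δ := by
    filter_upwards [hae] with x hx hxA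
    have hfx : f x ≤ c := hxA.2
    have hux : u x ≤ Lu - Real.log (1 / δ) - D := by
      rw [hu]
      have := div_le_div_of_nonneg_right hfx hε.le
      calc f x / ε ≤ c / ε := this
        _ = Lu - Real.log (1 / δ) - D := by
            rw [hc]; field_simp
    have hvx : v x - Lv ≤ Real.log δ := by
      have h1 : (u x - Lu) - (v x - Lv) ≥ -D := neg_le_of_abs_le hx |>.trans_eq rfl
      have h2 : v x - Lv ≤ u x - Lu + D := by linarith
      have h3 : Real.log (1 / δ) = - Real.log δ := by
        rw [one_div, Real.log_inv]
      linarith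
    have : Real.exp (v x) / partZ v ≤ δ := by
      rw [← hexpLv, ← Real.exp_sub]
      calc Real.exp (v x - Lv) ≤ Real.exp (Real.log δ) := Real.exp_le_exp.2 hvx
        _ = δ := Real.exp_log hδ0
    exact ENNReal.ofReal_le_ofReal this
  -- conclude
  rw [gibbs, withDensity_apply _ hAm]
  calc ∫⁻ x in A, ENNReal.ofReal (Real.exp (v x) / partZ v) ∂(volume.restrict (cube d))
      ≤ ∫⁻ _ in A, ENNReal.ofReal δ ∂(volume.restrict (cube d)) := by
        refine lintegral_mono_ae ?_
        rw [ae_restrict_iff' hAm]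
        exact hptwise
    _ = ENNReal.ofReal δ * (volume.restrict (cube d)) A := by
        rw [setLIntegral_const]
    _ ≤ ENNReal.ofReal δ * 1 := by
        refine mul_le_mul_right ?_ _
        calc (volume.restrict (cube d)) A ≤ (volume.restrict (cube d)) Set.univ :=
              measure_mono (Set.subset_univ _)
          _ = volume (cube d) := by simp
          _ = 1 := hvolcube
    _ = ENNReal.ofReal δ := mul_one _
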